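/- Let G be a group generated by elements s_0, s_1, ..., s_{n-1} satisfying the braid relations of type B_n and s_0^2 = 1, and let U be the subgroup generated by t_0 = s_0 s_1 s_0 and t_i = s_i for 1 ≤ i ≤ n-1. Then conjugation by s_0 maps U to itself: s_0 t_0 s_0 = t_1, s_0 t_1 s_0 = t_0, and s_0 t_i s_0 = t_i for all i ≥ 2. In particular s_0 normalizes U and G = U ∪ U s_0, so U has index at most 2 in G. -/

import Mathlib

/-- Let `G` be generated by `s 0, ..., s (n-1)` satisfying the braid relations of type `Bₙ`
and `(s 0)^2 = 1`, and let `U` be the subgroup generated by `t 0 = s 0 * s 1 * s 0`,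
`t i = s i` (`1 ≤ i ≤ n-1`).  Then conjugation by `s 0` swaps `t 0` and `t 1` and fixes the
other `t i`; in particular `s 0` normalizes `U`, every element of `G` lies in `U ∪ U * s 0`,
and `U` has index at most 2. -/
theorem subgroup_index_two_of_Bn_quotient {G : Type*} [Group G] (n : ℕ) (hn : 3 ≤ n)
    (s : ℕ → G)
    (hB4 : s 0 * s 1 * s 0 * s 1 = s 1 * s 0 * s 1 * s 0)
    (hB3 : ∀ i, 1 ≤ i → i + 1 ≤ n - 1 → s i * s (i + 1) * s i = s (i + 1) * s i * s (i + 1))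
    (hB2 : ∀ i j, i < n → j < n → i + 1 < j → s i * s j = s j * s i)
    (hs0 : s 0 ^ 2 = 1)
    (hgen : Subgroup.closure (s '' {i | i < n}) = (⊤ : Subgroup G))
    (t : ℕ → G)
    (ht0 : t 0 = s 0 * s 1 * s 0)
    (hti : ∀ i, 1 ≤ i → i ≤ n - 1 → t i = s i)
    (U : Subgroup G)
    (hU : U = Subgroup.closure (t '' {i | i < n})) :
    s 0 * t 0 * s 0 = t 1 ∧
    s 0 * t 1 * s 0 = t 0 ∧
    (∀ i, 2 ≤ i → i < n → s 0 * t i * s 0 = t i) ∧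
    s 0 ∈ Subgroup.normalizer (U : Set G) ∧
    (∀ g : G, g ∈ U ∨ ∃ u ∈ U, g = u * s 0) ∧
    U.index ≤ 2 := by
  have hs0s0 : s 0 * s 0 = 1 := by rw [← sq]; exact hs0
  have h1 : t 1 = s 1 := hti 1 le_rfl (by omega)
  have hA : s 0 * t 0 * s 0 = t 1 := by
    rw [ht0, h1, show s 0 * (s 0 * s 1 * s 0) * s 0 = (s 0 * s 0) * s 1 * (s 0 * s 0) by group,
      hs0s0]
    simp
  have hBq : s 0 * t 1 * s 0 = t 0 := by rw [ht0, h1]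
  have hC : ∀ i, 2 ≤ i → i < n → s 0 * t i * s 0 = t i := by
    intro i h2 hin
    have hti' : t i = s i := hti i (by omega) (by omega)
    have hcomm : s 0 * s i = s i * s 0 := hB2 0 i (by omega) hin (by omega)
    rw [hti', hcomm, mul_assoc, hs0s0, mul_one]
  -- conjugation by s 0 preserves U
  have hconj : ∀ u ∈ U, s 0 * u * s 0 ∈ U := by
    intro u hu
    rw [hU] at hu ⊢
    induction hu using Subgroup.closure_induction with
    | mem x hx =>
        obtain ⟨i, hi, rfl⟩ := hx
        rcases Nat.lt_or_ge i 2 with hi2 | hi2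
        · interval_cases i
          · rw [hA]; exact Subgroup.subset_closure ⟨1, show 1 < n by omega, rfl⟩
          · rw [hBq]; exact Subgroup.subset_closure ⟨0, show 0 < n by omega, rfl⟩
        · rw [hC i hi2 hi]; exact Subgroup.subset_closure ⟨i, hi, rfl⟩
    | one => rw [mul_one, hs0s0]; exact Subgroup.one_mem _
    | mul x y hx hy px py =>
        have : s 0 * (x * y) * s 0 = (s 0 * x * s 0) * (s 0 * y * s 0) := by
          rw [show (s 0 * x * s 0) * (s 0 * y * s 0) = s 0 * x * (s 0 * s 0) * y * s 0 by group,
            hs0s0]; group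
        rw [this]; exact Subgroup.mul_mem _ px py
    | inv x hx px =>
        have : s 0 * x⁻¹ * s 0 = (s 0 * x * s 0)⁻¹ := by
          rw [show (s 0 * x * s 0)⁻¹ = (s 0)⁻¹ * x⁻¹ * (s 0)⁻¹ by group]
          congr 1
          · congr 1; exact (inv_eq_of_mul_eq_one_right hs0s0).symm
          · exact (inv_eq_of_mul_eq_one_right hs0s0).symm
        rw [this]; exact Subgroup.inv_mem _ px
  have hs0inv : (s 0)⁻¹ = s 0 := inv_eq_of_mul_eq_one_right hs0s0
  have hnorm : s 0 ∈ Subgroup.normalizer (U : Set G) := by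
    rw [Subgroup.mem_normalizer_iff]
    intro h
    constructor
    · intro hh; rw [hs0inv]; exact hconj h hh
    · intro hh
      have := hconj _ hh
      rw [hs0inv] at this
      have heq : s 0 * (s 0 * h * s 0) * s 0 = h := by
        rw [show s 0 * (s 0 * h * s 0) * s 0 = (s 0 * s 0) * h * (s 0 * s 0) by group, hs0s0]
        simp
      rwa [heq] at this
  -- coset decomposition
  have hcover : ∀ g : G, g ∈ U ∨ ∃ u ∈ U, g = u * s 0 := by
    intro g
    have hg : g ∈ Subgroup.closure (s '' {i | i < n}) := by rw [hgen]; trivial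
    induction hg using Subgroup.closure_induction with
    | mem x hx =>
        obtain ⟨i, hi, rfl⟩ := hx
        have hi' : i < n := hi
        rcases Nat.eq_zero_or_pos i with rfl | hi1
        · exact Or.inr ⟨1, Subgroup.one_mem _, by rw [one_mul]⟩
        · left
          have : t i = s i := hti i hi1 (by omega)
          rw [← this, hU]
          exact Subgroup.subset_closure ⟨i, hi, rfl⟩
    | one => exact Or.inl (Subgroup.one_mem _)
    | mul x y hx hy px py =>
        rcases px with hxU | ⟨u, hu, rfl⟩
        · rcases py with hyU | ⟨v, hv, rfl⟩
          · exact Or.inl (Subgroup.mul_mem _ hxU hyU)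
          · exact Or.inr ⟨x * v, Subgroup.mul_mem _ hxU hv, by group⟩
        · rcases py with hyU | ⟨v, hv, rfl⟩
          · refine Or.inr ⟨u * (s 0 * y * s 0), Subgroup.mul_mem _ hu (hconj y hyU), ?_⟩
            rw [show u * (s 0 * y * s 0) * s 0 = u * s 0 * y * (s 0 * s 0) by group, hs0s0,
              mul_one]
          · refine Or.inl ?_
            have heq : u * s 0 * (v * s 0) = u * (s 0 * v * s 0) := by group
            rw [heq]
            exact Subgroup.mul_mem _ hu (hconj v hv)
    | inv x hx px =>
        rcases px with hxU | ⟨u, hu, rfl⟩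
        · exact Or.inl (Subgroup.inv_mem _ hxU)
        · refine Or.inr ⟨s 0 * u⁻¹ * s 0, hconj _ (Subgroup.inv_mem _ hu), ?_⟩
          rw [show (u * s 0)⁻¹ = (s 0)⁻¹ * u⁻¹ by group, hs0inv,
            show s 0 * u⁻¹ * s 0 * s 0 = s 0 * u⁻¹ * (s 0 * s 0) by group, hs0s0, mul_one]
  refine ⟨hA, hBq, hC, hnorm, hcover, ?_⟩
  by_cases hs0U : s 0 ∈ U
  · have hUtop : U = ⊤ := by
      rw [eq_top_iff]
      intro g _
      rcases hcover g with hg | ⟨u, hu, rfl⟩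
      · exact hg
      · exact Subgroup.mul_mem _ hu hs0U
    rw [hUtop, Subgroup.index_top]
    omega
  · have : U.index = 2 := by
      rw [Subgroup.index_eq_two_iff]
      refine ⟨s 0, fun b => ?_⟩
      rcases hcover b with hb | ⟨u, hu, rfl⟩
      · refine Or.inr ⟨hb, fun h => hs0U ?_⟩
        have : b⁻¹ * (b * s 0) ∈ U := Subgroup.mul_mem _ (Subgroup.inv_mem _ hb) h
        rwa [show b⁻¹ * (b * s 0) = s 0 by group] at this
      · refine Or.inl ⟨?_, fun h => hs0U ?_⟩
        · rw [show u * s 0 * s 0 = u * (s 0 * s 0) by group, hs0s0, mul_one]; exact hu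
        · have : u⁻¹ * (u * s 0) ∈ U := Subgroup.mul_mem _ (Subgroup.inv_mem _ hu) h
          rwa [show u⁻¹ * (u * s 0) = s 0 by group] at this
    omega
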